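/- Let $\Gamma$ be a star-shaped weighted tree with central vertex of weight $b$ and $k$ linear legs all of whose vertices have weight $\leq -2$, and suppose the legs come in complementary pairs (so $k = 2m$ and legs pair up with $1/cf + 1/cf' = -1$) and $b = -m$. Then the intersection matrix $M_\Gamma$ satisfies $\det M_\Gamma = 0$ and $M_\Gamma$ is negative semidefinite with kernel of rank exactly one. -/

import Mathlib

open Matrix

/-- The negative continued fraction `[a₁,…,aₙ]⁻`, computed in `ℚ`. -/
def ncf : List ℤ → ℚ
  | [] => 0
  | a :: l => (a : ℚ) - 1 / ncf l

/-- The intersection matrix of the star-shaped weighted tree with central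
vertex (`none`) of weight `b` and `2m` linear legs indexed by
`Fin m × Bool`; the weights of leg `(i,s)` are the entries of the list
`L i s`, read from the vertex adjacent to the centre outwards. -/
def starPairMat (m : ℕ) (b : ℤ) (L : Fin m → Bool → List ℤ) :
    Matrix (Option ((i : Fin m) × (s : Bool) × Fin (L i s).length))
      (Option ((i : Fin m) × (s : Bool) × Fin (L i s).length)) ℝ :=
  Matrix.of fun x y =>
    match x, y with
    | none, none => (b : ℝ)
    | none, some ⟨_, _, j⟩ => if (j : ℕ) = 0 then 1 else 0
    | some ⟨_, _, j⟩, none => if (j : ℕ) = 0 then 1 else 0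
    | some ⟨i, s, j⟩, some ⟨i', s', j'⟩ =>
        if i = i' ∧ s = s' then
          if (j : ℕ) = (j' : ℕ) then (((L i s).get j : ℤ) : ℝ)
          else if (j : ℕ) + 1 = (j' : ℕ) ∨ (j' : ℕ) + 1 = (j : ℕ) then 1 else 0
        else 0

lemma ncf_lt_neg_one : ∀ l : List ℤ, l ≠ [] → (∀ x ∈ l, x ≤ -2) → ncf l < -1 := by
  intro l
  induction l with
  | nil => intro h; exact absurd rfl h
  | cons a t ih =>
    intro _ hle
    have ha : (a : ℚ) ≤ -2 := by exact_mod_cast hle a (by simp)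
    rcases eq_or_ne t [] with rfl | ht
    · show (a : ℚ) - 1 / ncf [] < -1
      simp [ncf]; linarith
    · have h := ih ht (fun x hx => hle x (by simp [hx]))
      have hc : ncf t < 0 := lt_trans h (by norm_num)
      have h2 : -1 < 1 / ncf t := by
        rw [lt_div_iff_of_neg hc]; linarith
      show (a : ℚ) - 1 / ncf t < -1
      linarith

def nQ (l : List ℤ) : ℕ → ℚ
  | 0 => 1
  | j+1 => nQ l j * (-(ncf (l.drop j))⁻¹)

lemma nQ_pos (l : List ℤ) (hle : ∀ x ∈ l, x ≤ -2) :
    ∀ j, j ≤ l.length → 0 < nQ l j := by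
  intro j
  induction j with
  | zero => intro _; norm_num [nQ]
  | succ k ih =>
    intro hk
    have hk' : k < l.length := hk
    have hd : l.drop k ≠ [] := by
      simp [List.drop_eq_nil_iff]; omega
    have hlt : ncf (l.drop k) < -1 :=
      ncf_lt_neg_one _ hd (fun x hx => hle x (List.drop_subset _ _ hx))
    have : 0 < -(ncf (l.drop k))⁻¹ := by
      have h0 : ncf (l.drop k) < 0 := by linarith
      have := inv_lt_zero.mpr h0
      linarith
    have := ih (le_of_lt hk')
    show 0 < nQ l k * (-(ncf (l.drop k))⁻¹)
    positivity

lemma nQ_tail_zero (l : List ℤ) (j : ℕ) (hj : l.length ≤ j + 1) :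
    nQ l (j + 2) = 0 := by
  have : l.drop (j+1) = [] := List.drop_eq_nil_of_le hj
  show nQ l (j+1) * (-(ncf (l.drop (j+1)))⁻¹) = 0
  rw [this]
  simp [ncf]

lemma nQ_key (l : List ℤ) (hle : ∀ x ∈ l, x ≤ -2) (j : ℕ) (hj : j < l.length) :
    nQ l j + (l.get ⟨j, hj⟩ : ℚ) * nQ l (j+1) + nQ l (j+2) = 0 := by
  have hdrop : l.drop j = l.get ⟨j, hj⟩ :: l.drop (j+1) := by
    rw [List.get_eq_getElem]; exact List.drop_eq_getElem_cons hj
  have hd : l.drop j ≠ [] := by rw [hdrop]; exact List.cons_ne_nil _ _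
  have hc : ncf (l.drop j) < -1 :=
    ncf_lt_neg_one _ hd (fun x hx => hle x (List.drop_subset _ _ hx))
  have hc0 : ncf (l.drop j) ≠ 0 := by intro h; rw [h] at hc; norm_num at hc
  have e1 : (l.get ⟨j, hj⟩ : ℚ) = ncf (l.drop j) + (ncf (l.drop (j+1)))⁻¹ := by
    have : ncf (l.drop j) = (l.get ⟨j, hj⟩ : ℚ) - 1 / ncf (l.drop (j+1)) := by
      rw [hdrop]; rw [ncf]
    rw [this, one_div]; ring
  show nQ l j + _ * (nQ l j * (-(ncf (l.drop j))⁻¹)) +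
      (nQ l j * (-(ncf (l.drop j))⁻¹)) * (-(ncf (l.drop (j+1)))⁻¹) = 0
  have hcc : ncf (l.drop j) * (ncf (l.drop j))⁻¹ = 1 := mul_inv_cancel₀ hc0
  rw [e1]
  linear_combination (-(nQ l j)) * hcc



lemma starPairMat_symm (m : ℕ) (b : ℤ) (L : Fin m → Bool → List ℤ) :
    ∀ v w, starPairMat m b L v w = starPairMat m b L w v := by
  rintro (_ | ⟨i, s, j⟩) (_ | ⟨i', s', j'⟩) <;> simp only [starPairMat, Matrix.of_apply]
  by_cases h : i = i' ∧ s = s'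
  · obtain ⟨rfl, rfl⟩ := h
    simp only [and_self, if_true]
    by_cases hj : (j : ℕ) = (j' : ℕ)
    · have : j = j' := Fin.ext hj
      subst this; simp
    · rw [if_neg hj, if_neg (Ne.symm hj)]; split_ifs with h1 h2 <;> first | rfl | omega
  · rw [if_neg h, if_neg (fun hh => h ⟨hh.1.symm, hh.2.symm⟩)]

lemma starPairMat_offdiag_nonneg (m : ℕ) (b : ℤ) (L : Fin m → Bool → List ℤ) :
    ∀ v w, v ≠ w → 0 ≤ starPairMat m b L v w := by
  rintro (_ | ⟨i, s, j⟩) (_ | ⟨i', s', j'⟩) hvw <;>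
    simp only [starPairMat, Matrix.of_apply]
  · exact absurd rfl hvw
  · split_ifs <;> norm_num
  · split_ifs <;> norm_num
  · by_cases h : i = i' ∧ s = s'
    · obtain ⟨rfl, rfl⟩ := h
      simp only [and_self, if_true]
      by_cases hj : (j : ℕ) = (j' : ℕ)
      · exact absurd (by rw [Fin.ext hj]) hvw
      · rw [if_neg hj]; split_ifs <;> norm_num
    · rw [if_neg h]

def zvec (m : ℕ) (L : Fin m → Bool → List ℤ) :
    Option ((i : Fin m) × (s : Bool) × Fin (L i s).length) → ℝ
  | none => 1
  | some ⟨i, s, j⟩ => ((nQ (L i s) ((j : ℕ) + 1) : ℚ) : ℝ)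

lemma sum_V (m : ℕ) (L : Fin m → Bool → List ℤ)
    (f : Option ((i : Fin m) × (s : Bool) × Fin (L i s).length) → ℝ) :
    ∑ v, f v = f none + ∑ i, ∑ s, ∑ j, f (some ⟨i, s, j⟩) := by
  rw [Fintype.sum_option]
  congr 1
  rw [← Finset.univ_sigma_univ, Finset.sum_sigma]
  refine Finset.sum_congr rfl fun i _ => ?_
  rw [← Finset.univ_sigma_univ, Finset.sum_sigma]

lemma zvec_pos (m : ℕ) (L : Fin m → Bool → List ℤ)
    (hle : ∀ i s, ∀ x ∈ L i s, x ≤ -2) : ∀ v, 0 < zvec m L v := by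
  rintro (_ | ⟨i, s, j⟩)
  · norm_num [zvec]
  · show (0:ℝ) < ((nQ (L i s) ((j : ℕ) + 1) : ℚ) : ℝ)
    have := nQ_pos (L i s) (hle i s) ((j : ℕ) + 1) j.isLt
    exact_mod_cast this

lemma starPair_mulVec_zero (m : ℕ) (L : Fin m → Bool → List ℤ)
    (hne : ∀ i s, L i s ≠ [])
    (hle : ∀ i s, ∀ x ∈ L i s, x ≤ -2)
    (hcomp : ∀ i, 1 / ncf (L i false) + 1 / ncf (L i true) = -1) :
    (starPairMat m (-(m : ℤ)) L).mulVec (zvec m L) = 0 := by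
  funext v
  have hexp : (starPairMat m (-(m : ℤ)) L).mulVec (zvec m L) v
      = starPairMat m (-(m : ℤ)) L v none * zvec m L none
        + ∑ i, ∑ s, ∑ j, starPairMat m (-(m : ℤ)) L v (some ⟨i, s, j⟩)
            * zvec m L (some ⟨i, s, j⟩) := by
    show ∑ w, starPairMat m (-(m : ℤ)) L v w * zvec m L w = _
    exact sum_V m L _
  rw [Pi.zero_apply, hexp]
  obtain (_ | ⟨i, s, j⟩) := v
  · -- central row
    have hin : ∀ i (s : Bool), ∑ j : Fin (L i s).length,
        starPairMat m (-(m : ℤ)) L none (some ⟨i, s, j⟩) * zvec m L (some ⟨i, s, j⟩)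
        = ((nQ (L i s) 1 : ℚ) : ℝ) := by
      intro i s
      have hpos : 0 < (L i s).length := List.length_pos_iff.mpr (hne i s)
      rw [Finset.sum_eq_single (⟨0, hpos⟩ : Fin (L i s).length)]
      · simp [starPairMat, zvec]
      · intro b _ hb
        have hb0 : ¬((b : ℕ) = 0) := fun h => hb (Fin.ext h)
        simp [starPairMat, hb0]
      · intro h; exact absurd (Finset.mem_univ _) h
    have hpair : ∀ i : Fin m, ∑ s, ∑ j : Fin (L i s).length,
        starPairMat m (-(m : ℤ)) L none (some ⟨i, s, j⟩) * zvec m L (some ⟨i, s, j⟩)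
        = 1 := by
      intro i
      rw [Fintype.sum_bool, hin, hin]
      have h1 : nQ (L i false) 1 + nQ (L i true) 1 = 1 := by
        have hcf : ∀ s, nQ (L i s) 1 = -(ncf (L i s))⁻¹ := by
          intro s
          show 1 * (-(ncf ((L i s).drop 0))⁻¹) = _
          rw [List.drop_zero, one_mul]
        rw [hcf, hcf]
        have := hcomp i
        rw [one_div, one_div] at this
        linarith
      have h1' : ((nQ (L i false) 1 : ℚ) : ℝ) + ((nQ (L i true) 1 : ℚ) : ℝ) = 1 := by
        exact_mod_cast congrArg (fun q : ℚ => (q : ℝ)) h1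
      linarith
    have : ∑ i, ∑ s, ∑ j : Fin (L i s).length,
        starPairMat m (-(m : ℤ)) L none (some ⟨i, s, j⟩) * zvec m L (some ⟨i, s, j⟩)
        = (m : ℝ) := by
      rw [Finset.sum_congr rfl fun i _ => hpair i]
      simp
    rw [this]
    show ((-(m : ℤ) : ℤ) : ℝ) * zvec m L none + (m : ℝ) = 0
    simp [zvec]
  · -- leg row
    have hcol : ∑ i', ∑ s', ∑ j' : Fin (L i' s').length,
        starPairMat m (-(m : ℤ)) L (some ⟨i, s, j⟩) (some ⟨i', s', j'⟩)
          * zvec m L (some ⟨i', s', j'⟩)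
        = ∑ j' : Fin (L i s).length,
        starPairMat m (-(m : ℤ)) L (some ⟨i, s, j⟩) (some ⟨i, s, j'⟩)
          * zvec m L (some ⟨i, s, j'⟩) := by
      rw [Finset.sum_eq_single i]
      · rw [Finset.sum_eq_single s]
        · intro b _ hb
          apply Finset.sum_eq_zero
          intro j' _
          simp [starPairMat, Ne.symm hb]
        · intro h; exact absurd (Finset.mem_univ _) h
      · intro i' _ hii
        apply Finset.sum_eq_zero; intro s' _
        apply Finset.sum_eq_zero; intro j' _
        simp [starPairMat, Ne.symm hii]
      · intro h; exact absurd (Finset.mem_univ _) h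
    rw [hcol,
      show starPairMat m (-(m : ℤ)) L (some ⟨i, s, j⟩) none
        = (if (j : ℕ) = 0 then (1:ℝ) else 0) from rfl]
    have hterm : ∀ j' : Fin (L i s).length,
        starPairMat m (-(m : ℤ)) L (some ⟨i, s, j⟩) (some ⟨i, s, j'⟩)
          * zvec m L (some ⟨i, s, j'⟩)
        = (if j' = j then (((L i s).get j : ℤ) : ℝ) * ((nQ (L i s) ((j : ℕ) + 1) : ℚ) : ℝ) else 0)
          + (if (j' : ℕ) + 1 = (j : ℕ) then ((nQ (L i s) (j : ℕ) : ℚ) : ℝ) else 0)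
          + (if (j' : ℕ) = (j : ℕ) + 1 then ((nQ (L i s) ((j : ℕ) + 2) : ℚ) : ℝ) else 0) := by
      intro j'
      have hz' : zvec m L (some ⟨i, s, j'⟩) = ((nQ (L i s) ((j' : ℕ) + 1) : ℚ) : ℝ) := rfl
      have hM : starPairMat m (-(m : ℤ)) L (some ⟨i, s, j⟩) (some ⟨i, s, j'⟩)
          = if (j : ℕ) = (j' : ℕ) then (((L i s).get j : ℤ) : ℝ)
            else if (j : ℕ) + 1 = (j' : ℕ) ∨ (j' : ℕ) + 1 = (j : ℕ) then 1 else 0 := by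
        simp [starPairMat]
      rw [hM, hz']
      by_cases h1 : (j : ℕ) = (j' : ℕ)
      · have He : j' = j := Fin.ext h1.symm
        subst He
        rw [if_pos rfl, if_pos rfl, if_neg (by omega), if_neg (by omega)]
        ring
      · rw [if_neg h1, if_neg (fun h : j' = j => h1 (by rw [h]))]
        by_cases h2 : (j' : ℕ) + 1 = (j : ℕ)
        · rw [if_pos (by omega : (j:ℕ)+1 = (j':ℕ) ∨ (j':ℕ)+1 = (j:ℕ)), if_pos h2,
            if_neg (by omega), h2]
          ring
        · by_cases h3 : (j' : ℕ) = (j : ℕ) + 1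
          · rw [if_pos (by omega : (j:ℕ)+1 = (j':ℕ) ∨ (j':ℕ)+1 = (j:ℕ)), if_neg h2,
              if_pos h3, h3]
            ring
          · rw [if_neg (by omega : ¬((j:ℕ)+1 = (j':ℕ) ∨ (j':ℕ)+1 = (j:ℕ))), if_neg h2,
              if_neg h3]
            ring
    rw [Finset.sum_congr rfl fun j' _ => hterm j', Finset.sum_add_distrib,
      Finset.sum_add_distrib]
    have hS1 : ∑ j' : Fin (L i s).length, (if j' = j then (((L i s).get j : ℤ) : ℝ) * ((nQ (L i s) ((j : ℕ) + 1) : ℚ) : ℝ) else 0)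
        = (((L i s).get j : ℤ) : ℝ) * ((nQ (L i s) ((j : ℕ) + 1) : ℚ) : ℝ) := by
      rw [Finset.sum_ite_eq' Finset.univ j fun _ => (((L i s).get j : ℤ) : ℝ) * ((nQ (L i s) ((j : ℕ) + 1) : ℚ) : ℝ)]
      simp
    have hS3 : ∑ j' : Fin (L i s).length, (if (j' : ℕ) = (j : ℕ) + 1 then ((nQ (L i s) ((j : ℕ) + 2) : ℚ) : ℝ) else 0)
        = ((nQ (L i s) ((j : ℕ) + 2) : ℚ) : ℝ) := by
      by_cases hlt : (j : ℕ) + 1 < (L i s).length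
      · rw [Finset.sum_eq_single (⟨(j : ℕ) + 1, hlt⟩ : Fin (L i s).length)]
        · simp
        · intro b _ hb
          have : ¬((b : ℕ) = (j : ℕ) + 1) := fun h => hb (Fin.ext h)
          simp [this]
        · intro h; exact absurd (Finset.mem_univ _) h
      · have hz2 : nQ (L i s) ((j : ℕ) + 2) = 0 := nQ_tail_zero (L i s) (j : ℕ) (by omega)
        rw [hz2]
        push_cast
        apply Finset.sum_eq_zero
        intro j' _
        have : ¬((j' : ℕ) = (j : ℕ) + 1) := by have := j'.isLt; omega
        simp [this]
    have hS2 : (if (j : ℕ) = 0 then (1:ℝ) else 0) * zvec m L none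
          + ∑ j' : Fin (L i s).length, (if (j' : ℕ) + 1 = (j : ℕ) then ((nQ (L i s) (j : ℕ) : ℚ) : ℝ) else 0)
        = ((nQ (L i s) (j : ℕ) : ℚ) : ℝ) := by
      have hzn : zvec m L none = 1 := rfl
      rw [hzn, mul_one]
      rcases Nat.eq_zero_or_pos (j : ℕ) with h0 | h0
      · rw [if_pos h0]
        have hz0 : ∑ j' : Fin (L i s).length, (if (j' : ℕ) + 1 = (j : ℕ) then ((nQ (L i s) (j : ℕ) : ℚ) : ℝ) else 0) = 0 := by
          apply Finset.sum_eq_zero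
          intro j' _
          rw [if_neg (by omega)]
        rw [hz0, h0]
        show (1:ℝ) + 0 = ((nQ (L i s) 0 : ℚ) : ℝ)
        norm_num [nQ]
      · rw [if_neg (by omega)]
        obtain ⟨jp, hjp⟩ : ∃ jp, (j : ℕ) = jp + 1 := ⟨(j : ℕ) - 1, by omega⟩
        have hjpn : jp < (L i s).length := by have := j.isLt; omega
        rw [Finset.sum_eq_single (⟨jp, hjpn⟩ : Fin (L i s).length)]
        · rw [if_pos (by simp [hjp]), zero_add]
        · intro b _ hb
          have hbn : ¬((b : ℕ) + 1 = (j : ℕ)) := by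
            intro h
            exact hb (Fin.ext (show (b : ℕ) = jp by omega))
          simp [hbn]
        · intro h; exact absurd (Finset.mem_univ _) h
    have hfin : ((nQ (L i s) (j : ℕ) : ℚ) : ℝ)
        + (((L i s).get j : ℤ) : ℝ) * ((nQ (L i s) ((j : ℕ) + 1) : ℚ) : ℝ)
        + ((nQ (L i s) ((j : ℕ) + 2) : ℚ) : ℝ) = 0 := by
      have hk := nQ_key (L i s) (hle i s) (j : ℕ) j.isLt
      simp only [Fin.eta] at hk
      have hk' : ((nQ (L i s) (j:ℕ) + ((L i s).get j : ℚ) * nQ (L i s) ((j:ℕ)+1)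
          + nQ (L i s) ((j:ℕ)+2) : ℚ) : ℝ) = 0 := by
        rw [hk]; norm_num
      push_cast at hk'
      linarith [hk']
    linarith [hS1, hS2, hS3, hfin]


lemma quad_ident {ι : Type*} [Fintype ι] (M : Matrix ι ι ℝ) (z : ι → ℝ)
    (hz : ∀ i, 0 < z i) (hsym : ∀ i j, M i j = M j i)
    (hMz : M.mulVec z = 0) (x : ι → ℝ) :
    x ⬝ᵥ M.mulVec x =
      -(1/2) * ∑ i, ∑ j, (z i * M i j * z j) * (x i / z i - x j / z j)^2 := by
  have hrow : ∀ i, ∑ j, M i j * z j = 0 := by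
    intro i
    have := congrFun hMz i
    simpa [Matrix.mulVec, dotProduct] using this
  have S1 : ∑ i, ∑ j, z i * M i j * z j * (x i / z i)^2 = 0 := by
    apply Finset.sum_eq_zero
    intro i _
    have : ∑ j, z i * M i j * z j * (x i / z i)^2
        = (z i * (x i / z i)^2) * ∑ j, M i j * z j := by
      rw [Finset.mul_sum]
      exact Finset.sum_congr rfl fun j _ => by ring
    rw [this, hrow, mul_zero]
  have S2 : ∑ i, ∑ j, z i * M i j * z j * (x j / z j)^2 = 0 := by
    rw [Finset.sum_comm]
    apply Finset.sum_eq_zero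
    intro j _
    have : ∑ i, z i * M i j * z j * (x j / z j)^2
        = (z j * (x j / z j)^2) * ∑ i, M j i * z i := by
      rw [Finset.mul_sum]
      exact Finset.sum_congr rfl fun i _ => by rw [hsym i j]; ring
    rw [this, hrow, mul_zero]
  have S3 : ∑ i, ∑ j, (z i * M i j * z j) * ((x i / z i) * (x j / z j))
      = x ⬝ᵥ M.mulVec x := by
    have hx : ∀ i j, (z i * M i j * z j) * ((x i / z i) * (x j / z j))
        = x i * (M i j * x j) := by
      intro i j
      have h1 : z i ≠ 0 := ne_of_gt (hz i)
      have h2 : z j ≠ 0 := ne_of_gt (hz j)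
      field_simp
    simp only [hx]
    simp [dotProduct, Matrix.mulVec, Finset.mul_sum]
  have expand : ∀ i j, (z i * M i j * z j) * (x i / z i - x j / z j)^2
      = z i * M i j * z j * (x i / z i)^2
        - 2 * ((z i * M i j * z j) * ((x i / z i) * (x j / z j)))
        + z i * M i j * z j * (x j / z j)^2 := by
    intro i j; ring
  have key : ∑ i, ∑ j, (z i * M i j * z j) * (x i / z i - x j / z j)^2
      = (∑ i, ∑ j, z i * M i j * z j * (x i / z i)^2)
        - 2 * (∑ i, ∑ j, (z i * M i j * z j) * ((x i / z i) * (x j / z j)))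
        + ∑ i, ∑ j, z i * M i j * z j * (x j / z j)^2 := by
    simp only [expand, Finset.sum_add_distrib, Finset.sum_sub_distrib, ← Finset.sum_mul,
      ← Finset.mul_sum]
  rw [key, S1, S2, S3]
  ring


/-- let `Γ` be a star-shaped weighted tree whose central vertex
has weight `b = -m` and whose `k = 2m` linear legs have all weights `≤ -2` and
come in complementary pairs (`1/cf + 1/cf' = -1`).  Then the intersection
matrix `M_Γ` has determinant `0`, is negative semidefinite, and its kernel has
rank exactly one. -/
theorem stmt_19 (m : ℕ) (L : Fin m → Bool → List ℤ)
    (hne : ∀ i s, L i s ≠ [])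
    (hle : ∀ i s, ∀ x ∈ L i s, x ≤ -2)
    (hcomp : ∀ i, 1 / ncf (L i false) + 1 / ncf (L i true) = -1) :
    (starPairMat m (-(m : ℤ)) L).det = 0 ∧
    (∀ x, x ⬝ᵥ (starPairMat m (-(m : ℤ)) L).mulVec x ≤ 0) ∧
    (∃ z, z ≠ 0 ∧ (starPairMat m (-(m : ℤ)) L).mulVec z = 0 ∧
      ∀ y, (starPairMat m (-(m : ℤ)) L).mulVec y = 0 → ∃ c : ℝ, y = c • z) := by
  set M := starPairMat m (-(m : ℤ)) L with hM
  set z := zvec m L with hzdef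
  have hz : ∀ v, 0 < z v := zvec_pos m L hle
  have hsym : ∀ v w, M v w = M w v := starPairMat_symm m _ L
  have hMz : M.mulVec z = 0 := starPair_mulVec_zero m L hne hle hcomp
  have hzne : z ≠ 0 := by
    intro h
    have := congrFun h none
    have hz0 : z none = 1 := rfl
    rw [hz0] at this
    norm_num at this
  have hoff : ∀ v w, v ≠ w → 0 ≤ M v w := starPairMat_offdiag_nonneg m _ L
  have htermnn : ∀ (x : _ → ℝ) v w,
      0 ≤ (z v * M v w * z w) * (x v / z v - x w / z w)^2 := by
    intro x v w
    rcases eq_or_ne v w with rfl | hvw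
    · simp
    · exact mul_nonneg (mul_nonneg (mul_nonneg (hz v).le (hoff v w hvw)) (hz w).le)
        (sq_nonneg _)
  refine ⟨?_, ?_, z, hzne, hMz, ?_⟩
  · exact (Matrix.exists_mulVec_eq_zero_iff).mp ⟨z, hzne, hMz⟩
  · intro x
    rw [quad_ident M z hz hsym hMz x]
    have hS : 0 ≤ ∑ v, ∑ w, (z v * M v w * z w) * (x v / z v - x w / z w)^2 :=
      Finset.sum_nonneg fun v _ => Finset.sum_nonneg fun w _ => htermnn x v w
    linarith
  · intro y hy
    have h0 : y ⬝ᵥ M.mulVec y = 0 := by rw [hy, dotProduct_zero]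
    rw [quad_ident M z hz hsym hMz y] at h0
    have hS0 : ∑ v, ∑ w, (z v * M v w * z w) * (y v / z v - y w / z w)^2 = 0 := by
      linarith
    have hterm0 : ∀ v w, (z v * M v w * z w) * (y v / z v - y w / z w)^2 = 0 := by
      intro v w
      have h1 := (Finset.sum_eq_zero_iff_of_nonneg fun v _ =>
        Finset.sum_nonneg fun w _ => htermnn y v w).mp hS0 v (Finset.mem_univ v)
      exact (Finset.sum_eq_zero_iff_of_nonneg fun w _ => htermnn y v w).mp h1 w
        (Finset.mem_univ w)
    have hedge : ∀ v w, M v w ≠ 0 → y v / z v = y w / z w := by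
      intro v w hMvw
      have h1 := hterm0 v w
      have h2 : z v * M v w * z w ≠ 0 :=
        mul_ne_zero (mul_ne_zero (hz v).ne' hMvw) (hz w).ne'
      have h3 : (y v / z v - y w / z w)^2 = 0 := by
        rcases mul_eq_zero.mp h1 with h | h
        · exact absurd h h2
        · exact h
      have h4 : y v / z v - y w / z w = 0 := by
        exact pow_eq_zero_iff (by norm_num) |>.mp h3
      linarith
    have hprop : ∀ v, y v / z v = y none := by
      rintro (_ | ⟨i, s, j⟩)
      · have : z none = 1 := rfl
        rw [this, div_one]
      · obtain ⟨k, hk⟩ := j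
        induction k with
        | zero =>
          have hMe : M none (some ⟨i, s, ⟨0, hk⟩⟩) ≠ 0 := by
            simp [hM, starPairMat]
          have := hedge none (some ⟨i, s, ⟨0, hk⟩⟩) hMe
          have hz0 : z none = 1 := rfl
          rw [hz0, div_one] at this
          exact this.symm
        | succ k ih =>
          have hk' : k < (L i s).length := by omega
          have hMe : M (some ⟨i, s, ⟨k, hk'⟩⟩) (some ⟨i, s, ⟨k + 1, hk⟩⟩) ≠ 0 := by
            simp [hM, starPairMat]
          have := hedge _ _ hMe
          rw [← this]
          exact ih hk'
    refine ⟨y none, funext fun v => ?_⟩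
    have := hprop v
    have hzv : z v ≠ 0 := (hz v).ne'
    rw [div_eq_iff hzv] at this
    rw [this]
    simp [mul_comm]
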